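/- If E(β₁,β₂) > 0, then there exists n' such that for all n ≥ n', the quadratic form q(x₁,x₂) = n(F_n)x₁² + n(F_{n+1})x₂² on ℝ² is positive definite; if E(β₁,β₂) < 0, then there exists n' such that for all n ≥ n' the form is negative definite. -/

import Mathlib

open Real goldenRatio Filter

noncomputable def goldenα : ℝ := (1 + Real.sqrt 5) / 2

noncomputable def Efun (β₁ β₂ : ℝ) : ℝ :=
  (1 / 5) * (1 + β₁ + 2 * β₂ + 5 * β₁ * β₂ + goldenα * (β₁ + 3 * β₂ + 8 * β₁ * β₂))

/-- Norm of the `n`-th Fibonacci quaternion in `ℍ(β₁,β₂)`. -/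
noncomputable def nrm (β₁ β₂ : ℝ) (n : ℕ) : ℝ :=
  (Nat.fib n : ℝ) ^ 2 + β₁ * (Nat.fib (n + 1) : ℝ) ^ 2
    + β₂ * (Nat.fib (n + 2) : ℝ) ^ 2 + β₁ * β₂ * (Nat.fib (n + 3) : ℝ) ^ 2

lemma fibsq (k : ℕ) :
    (Nat.fib k : ℝ) ^ 2 = ((φ ^ k) ^ 2 + (ψ ^ k) ^ 2 - 2 * (-1 : ℝ) ^ k) / 5 := by
  have h2 : φ ^ k * ψ ^ k = (-1 : ℝ) ^ k := by rw [← mul_pow, goldenRatio_mul_goldenConj]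
  rw [Real.coe_fib_eq, div_pow, Real.sq_sqrt (by norm_num : (0:ℝ) ≤ 5)]
  linear_combination (-2/5 : ℝ) * h2

lemma nrm_eq (β₁ β₂ : ℝ) (n : ℕ) :
    nrm β₁ β₂ n = Efun β₁ β₂ * (φ ^ n) ^ 2
      + (1/5) * (1 + β₁ * ψ^2 + β₂ * ψ^4 + β₁ * β₂ * ψ^6) * (ψ ^ n) ^ 2
      + (-2/5) * (1 - β₁ + β₂ - β₁ * β₂) * (-1 : ℝ) ^ n := by
  have hα : goldenα = φ := rfl
  unfold nrm Efun
  rw [fibsq n, fibsq (n+1), fibsq (n+2), fibsq (n+3), hα]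
  simp only [pow_add]
  linear_combination (((φ ^ n) ^ 2 / 5) *
    (β₁ + β₂ * (φ^2 + φ + 2) + β₁ * β₂ * (φ^4 + φ^3 + 2*φ^2 + 3*φ + 5))) * goldenRatio_sq

theorem fib_quadratic_form_definite (β₁ β₂ : ℝ) :
    (Efun β₁ β₂ > 0 → ∃ n' : ℕ, ∀ n ≥ n', ∀ x₁ x₂ : ℝ, (x₁, x₂) ≠ (0, 0) →
      nrm β₁ β₂ n * x₁ ^ 2 + nrm β₁ β₂ (n + 1) * x₂ ^ 2 > 0) ∧
    (Efun β₁ β₂ < 0 → ∃ n' : ℕ, ∀ n ≥ n', ∀ x₁ x₂ : ℝ, (x₁, x₂) ≠ (0, 0) →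
      nrm β₁ β₂ n * x₁ ^ 2 + nrm β₁ β₂ (n + 1) * x₂ ^ 2 < 0) := by
  set E := Efun β₁ β₂ with hE
  set B := (1/5) * (1 + β₁ * ψ^2 + β₂ * ψ^4 + β₁ * β₂ * ψ^6) with hB
  set C := (-2/5) * (1 - β₁ + β₂ - β₁ * β₂) with hC
  set M := |B| + |C| with hM
  -- bound on the error term
  have hψ1 : |ψ| ≤ 1 := by
    rw [abs_le]
    constructor
    · exact le_of_lt neg_one_lt_goldenConj
    · linarith [goldenConj_neg]
  have hbound : ∀ n : ℕ, |nrm β₁ β₂ n - E * (φ ^ n) ^ 2| ≤ M := by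
    intro n
    have h1 : nrm β₁ β₂ n - E * (φ ^ n) ^ 2 = B * (ψ ^ n) ^ 2 + C * (-1:ℝ) ^ n := by
      rw [nrm_eq]; ring
    rw [h1]
    have h2 : |(ψ ^ n) ^ 2| ≤ 1 := by
      rw [abs_pow, abs_pow]
      exact pow_le_one₀ (pow_nonneg (abs_nonneg _) _) (pow_le_one₀ (abs_nonneg _) hψ1)
    have h3 : |(-1:ℝ) ^ n| = 1 := by
      rw [abs_pow, abs_neg, abs_one, one_pow]
    calc |B * (ψ ^ n) ^ 2 + C * (-1:ℝ) ^ n|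
        ≤ |B * (ψ ^ n) ^ 2| + |C * (-1:ℝ) ^ n| := abs_add_le _ _
      _ = |B| * |(ψ ^ n) ^ 2| + |C| * |(-1:ℝ) ^ n| := by rw [abs_mul B, abs_mul C]
      _ ≤ |B| * 1 + |C| * 1 := by
          gcongr
          · rw [h3]
      _ = M := by rw [hM]; ring
  -- eventually |E| * (φ^2)^n > M
  have hmain : E ≠ 0 → ∃ N : ℕ, ∀ n ≥ N, M < |E| * (φ ^ n) ^ 2 := by
    intro hEne
    have hφ2 : 1 < φ ^ 2 := one_lt_pow₀ one_lt_goldenRatio (by norm_num)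
    have htend : Tendsto (fun n : ℕ => |E| * (φ ^ 2) ^ n) atTop atTop :=
      (tendsto_pow_atTop_atTop_of_one_lt hφ2).const_mul_atTop (abs_pos.mpr hEne)
    have := (htend.eventually_gt_atTop M)
    rw [eventually_atTop] at this
    obtain ⟨N, hN⟩ := this
    refine ⟨N, fun n hn => ?_⟩
    have := hN n hn
    rwa [← pow_mul, mul_comm 2 n, pow_mul] at this
  constructor
  · intro hpos
    obtain ⟨N, hN⟩ := hmain (ne_of_gt hpos)
    refine ⟨N, fun n hn x₁ x₂ hx => ?_⟩
    have key : ∀ m ≥ N, 0 < nrm β₁ β₂ m := by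
      intro m hm
      have h1 := hbound m
      have h2 := hN m hm
      rw [abs_of_pos hpos] at h2
      rw [abs_le] at h1
      linarith [h1.1]
    have k1 := key n hn
    have k2 := key (n + 1) (le_trans hn (Nat.le_succ n))
    have hx' : x₁ ≠ 0 ∨ x₂ ≠ 0 := by
      by_contra h
      push_neg at h
      exact hx (by simp [h.1, h.2])
    rcases hx' with h | h
    · have : 0 < x₁ ^ 2 := pow_pos (abs_pos.mpr h) 2 |>.trans_eq (by rw [← abs_pow, abs_of_nonneg (sq_nonneg _)])
      nlinarith [sq_nonneg x₂]
    · have : 0 < x₂ ^ 2 := pow_pos (abs_pos.mpr h) 2 |>.trans_eq (by rw [← abs_pow, abs_of_nonneg (sq_nonneg _)])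
      nlinarith [sq_nonneg x₁]
  · intro hneg
    obtain ⟨N, hN⟩ := hmain (ne_of_lt hneg)
    refine ⟨N, fun n hn x₁ x₂ hx => ?_⟩
    have key : ∀ m ≥ N, nrm β₁ β₂ m < 0 := by
      intro m hm
      have h1 := hbound m
      have h2 := hN m hm
      rw [abs_of_neg hneg] at h2
      rw [abs_le] at h1
      linarith [h1.2]
    have k1 := key n hn
    have k2 := key (n + 1) (le_trans hn (Nat.le_succ n))
    have hx' : x₁ ≠ 0 ∨ x₂ ≠ 0 := by
      by_contra h
      push_neg at h
      exact hx (by simp [h.1, h.2])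
    rcases hx' with h | h
    · have : 0 < x₁ ^ 2 := pow_pos (abs_pos.mpr h) 2 |>.trans_eq (by rw [← abs_pow, abs_of_nonneg (sq_nonneg _)])
      nlinarith [sq_nonneg x₂]
    · have : 0 < x₂ ^ 2 := pow_pos (abs_pos.mpr h) 2 |>.trans_eq (by rw [← abs_pow, abs_of_nonneg (sq_nonneg _)])
      nlinarith [sq_nonneg x₁]
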